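/- The total window-averaged decrement is bounded by the boundedness and variation terms: Σ_{t=1}^{T} (1/W) Σ_{i=0}^{K−1} η^i [φ_{t−i}(x_{t−i}) − φ_{t−i}(x_{t+1−i})] ≤ 2MT/W + Σ_{j=0}^{T} max(0, sup_{x∈𝒳} (φ_{j+1}(x) − φ_j(x))). -/

import Mathlib

private theorem tele_aux (f : ℤ → ℝ) (b : ℤ) (hb : 1 ≤ b) :
    ∑ t ∈ Finset.Icc (1:ℤ) b, (f t - f (t+1)) = f 1 - f (b+1) := by
  refine Int.le_induction
    (motive := fun b _ => ∑ t ∈ Finset.Icc (1:ℤ) b, (f t - f (t+1)) = f 1 - f (b+1)) ?_ ?_ b hb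
  · simp
  · intro n hn ih
    have hins : Finset.Icc (1:ℤ) (n+1) = insert (n+1) (Finset.Icc 1 n) := by
      ext y; simp only [Finset.mem_Icc, Finset.mem_insert]; omega
    rw [hins, Finset.sum_insert (by simp), ih]; ring

/-- the total window-averaged decrement is bounded by the boundedness
and variation terms:
`∑_{t=1}^{T} (1/W) ∑_{i=0}^{K-1} η^i [φ_{t-i}(x_{t-i}) - φ_{t-i}(x_{t+1-i})]
  ≤ 2MT/W + ∑_{j=0}^{T} max(0, sup_x (φ_{j+1}(x) - φ_j(x)))`. -/
theorem window_decrement_total_bound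
    {X : Type*} [Nonempty X]
    (K : ℕ) (hK : 1 ≤ K) (η : ℝ) (hη0 : 0 < η) (hη1 : η < 1)
    (M : ℝ) (hM : 0 < M) (T : ℤ) (hT : 1 ≤ T)
    (φ : ℤ → X → ℝ)
    (hbound : ∀ t ≤ T + 1, ∀ x : X, |φ t x| ≤ M)
    (hzero : ∀ t ≤ (0 : ℤ), ∀ x : X, φ t x = 0)
    (x : ℤ → X)
    (W : ℝ) (hW : W = ∑ i ∈ Finset.range K, η ^ i) :
    ∑ t ∈ Finset.Icc (1 : ℤ) T, (1 / W) * ∑ i ∈ Finset.range K,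
        η ^ i * (φ (t - i) (x (t - i)) - φ (t - i) (x (t + 1 - i)))
      ≤ 2 * M * (T : ℝ) / W
        + ∑ j ∈ Finset.Icc (0 : ℤ) T, max 0 (⨆ x' : X, (φ (j + 1) x' - φ j x')) := by
  classical
  set g : ℤ → ℝ := fun s => φ s (x s) with hg
  set v : ℤ → ℝ := fun j => max 0 (⨆ x' : X, (φ (j + 1) x' - φ j x')) with hv
  have hgb : ∀ s : ℤ, s ≤ T + 1 → |g s| ≤ M := fun s hs => hbound s hs (x s)
  have hg0 : ∀ s : ℤ, s ≤ 0 → g s = 0 := fun s hs => hzero s hs (x s)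
  have hvnn : ∀ j : ℤ, 0 ≤ v j := fun j => le_max_left _ _
  have hv0 : ∀ j : ℤ, j < 0 → v j = 0 := by
    intro j hj
    have h1 : ∀ x' : X, φ (j+1) x' - φ j x' = 0 := by
      intro x'; rw [hzero (j+1) (by omega), hzero j (by omega)]; ring
    simp only [hv]
    rw [show (⨆ x' : X, (φ (j + 1) x' - φ j x')) = 0 from by simp [h1]]
    simp
  have hηnn : ∀ i : ℕ, (0:ℝ) ≤ η ^ i := fun i => pow_nonneg hη0.le i
  have hηle1 : ∀ i : ℕ, η ^ i ≤ 1 := fun i => pow_le_one₀ hη0.le hη1.le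
  have hW1 : (1:ℝ) ≤ W := by
    rw [hW]
    calc (1:ℝ) = η ^ 0 := by simp
      _ ≤ ∑ i ∈ Finset.range K, η ^ i :=
        Finset.single_le_sum (fun i _ => hηnn i) (Finset.mem_range.mpr hK)
  have hW0 : (0:ℝ) < W := by linarith
  have hsup : ∀ j : ℤ, j ≤ T → ∀ y : X, φ (j+1) y - φ j y ≤ v j := by
    intro j hj y
    refine le_trans (le_ciSup (f := fun x' : X => φ (j+1) x' - φ j x') ?_ y) (le_max_right _ _)
    refine ⟨2*M, ?_⟩
    rintro z ⟨x', rfl⟩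
    have h1 := abs_le.mp (hbound (j+1) (by omega) x')
    have h2 := abs_le.mp (hbound j (by omega) x')
    simp only []
    linarith [h1.1, h1.2, h2.1, h2.2]
  -- per-term decomposition
  have hterm : ∀ t ∈ Finset.Icc (1:ℤ) T, ∀ i ∈ Finset.range K,
      η ^ i * (φ (t - i) (x (t - i)) - φ (t - i) (x (t + 1 - i)))
        ≤ η ^ i * (g (t - i) - g (t + 1 - i)) + η ^ i * v (t - i) := by
    intro t ht i _
    have ht' := Finset.mem_Icc.mp ht
    have hj : (t - i : ℤ) ≤ T := by omega
    have key : φ (t - i) (x (t - i)) - φ (t - i) (x (t + 1 - i))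
        ≤ (g (t - i) - g (t + 1 - i)) + v (t - i) := by
      have h2 : φ ((t - i) + 1) (x (t + 1 - i)) - φ (t - i) (x (t + 1 - i)) ≤ v (t - i) :=
        hsup (t - i) hj (x (t + 1 - i))
      have e1 : (t - (i:ℤ)) + 1 = t + 1 - i := by ring
      rw [e1] at h2
      have e2 : g (t + 1 - i) = φ (t + 1 - i) (x (t + 1 - i)) := rfl
      have e3 : g (t - i) = φ (t - i) (x (t - i)) := rfl
      rw [e2, e3]
      linarith
    calc η ^ i * (φ (t - i) (x (t - i)) - φ (t - i) (x (t + 1 - i)))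
        ≤ η ^ i * ((g (t - i) - g (t + 1 - i)) + v (t - i)) :=
          mul_le_mul_of_nonneg_left key (hηnn i)
      _ = η ^ i * (g (t - i) - g (t + 1 - i)) + η ^ i * v (t - i) := by ring
  have hsum1 : ∀ t ∈ Finset.Icc (1:ℤ) T,
      (∑ i ∈ Finset.range K, η ^ i * (φ (t - i) (x (t - i)) - φ (t - i) (x (t + 1 - i))))
        ≤ (∑ i ∈ Finset.range K, η ^ i * (g (t - i) - g (t + 1 - i)))
          + (∑ i ∈ Finset.range K, η ^ i * v (t - i)) := by
    intro t ht
    rw [← Finset.sum_add_distrib]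
    exact Finset.sum_le_sum (hterm t ht)
  -- telescoping part
  have htele : ∑ t ∈ Finset.Icc (1:ℤ) T, ∑ i ∈ Finset.range K,
      η ^ i * (g (t - i) - g (t + 1 - i))
      = ∑ i ∈ Finset.range K, η ^ i * (g (1 - i) - g (T + 1 - i)) := by
    rw [Finset.sum_comm]
    refine Finset.sum_congr rfl ?_
    intro i _
    rw [← Finset.mul_sum]
    congr 1
    exact tele_aux (fun s => g (s - i)) T hT
  -- numeric bound on telescoped sum
  set n : ℕ := T.toNat with hn
  have hnT : (n : ℤ) = T := Int.toNat_of_nonneg (by omega)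
  have hn1 : 1 ≤ n := by omega
  have hnTR : (n : ℝ) = (T : ℝ) := by exact_mod_cast congrArg (Int.cast : ℤ → ℝ) hnT
  have hB : ∑ i ∈ Finset.range K, η ^ i * (g (1 - i) - g (T + 1 - i)) ≤ 2 * M * (T:ℝ) := by
    have hsplit : ∑ i ∈ Finset.range K, η ^ i * (g (1 - i) - g (T + 1 - i))
        = (∑ i ∈ Finset.range K, η ^ i * g (1 - i))
          - ∑ i ∈ Finset.range K, η ^ i * g (T + 1 - i) := by
      rw [← Finset.sum_sub_distrib]; exact Finset.sum_congr rfl fun i _ => by ring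
    have hfirst : ∑ i ∈ Finset.range K, η ^ i * g (1 - i) = g 1 := by
      rw [Finset.sum_eq_single_of_mem 0 (Finset.mem_range.mpr hK)]
      · simp
      · intro i _ hi
        rw [hg0 (1 - i) (by omega), mul_zero]
    rw [hsplit, hfirst]
    by_cases hKT : K ≤ n
    · -- K ≤ T : crude bound
      have hS : - ∑ i ∈ Finset.range K, η ^ i * g (T + 1 - i)
          ≤ ∑ i ∈ Finset.range K, η ^ i * M := by
        rw [← Finset.sum_neg_distrib]
        refine Finset.sum_le_sum ?_
        intro i _
        have h := abs_le.mp (hgb (T + 1 - i) (by omega))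
        nlinarith [hηnn i, h.1]
      have hS2 : ∑ i ∈ Finset.range K, η ^ i * M ≤ (K:ℝ) * M := by
        calc ∑ i ∈ Finset.range K, η ^ i * M ≤ ∑ i ∈ Finset.range K, 1 * M :=
            Finset.sum_le_sum fun i _ => mul_le_mul_of_nonneg_right (hηle1 i) hM.le
          _ = (K:ℝ) * M := by simp
      have hg1 := abs_le.mp (hgb 1 (by omega))
      have hKn : (K:ℝ) ≤ (T:ℝ) := by
        rw [← hnTR]; exact_mod_cast hKT
      have hTn1 : (1:ℝ) ≤ (T:ℝ) := by exact_mod_cast hT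
      nlinarith [hg1.2, mul_nonneg hM.le (sub_nonneg.mpr hTn1),
        mul_le_mul_of_nonneg_right hKn hM.le]
    · -- K > T : use cancellation of the i = T term
      push_neg at hKT
      have hss : ∑ i ∈ Finset.range K, η ^ i * g (T + 1 - i)
          = ∑ i ∈ Finset.range (n+1), η ^ i * g (T + 1 - i) := by
        symm
        refine Finset.sum_subset (Finset.range_subset_range.mpr (by omega)) ?_
        intro i hi hni
        simp only [Finset.mem_range] at hi hni
        rw [hg0 (T + 1 - i) (by omega), mul_zero]
      rw [hss, Finset.sum_range_succ, show (T + 1 - (n:ℤ)) = 1 from by omega]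
      have hS : - ∑ i ∈ Finset.range n, η ^ i * g (T + 1 - i)
          ≤ ∑ i ∈ Finset.range n, η ^ i * M := by
        rw [← Finset.sum_neg_distrib]
        refine Finset.sum_le_sum ?_
        intro i _
        have h := abs_le.mp (hgb (T + 1 - i) (by omega))
        nlinarith [hηnn i, h.1]
      have hS2 : ∑ i ∈ Finset.range n, η ^ i * M ≤ (n:ℝ) * M := by
        calc ∑ i ∈ Finset.range n, η ^ i * M ≤ ∑ i ∈ Finset.range n, 1 * M :=
            Finset.sum_le_sum fun i _ => mul_le_mul_of_nonneg_right (hηle1 i) hM.le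
          _ = (n:ℝ) * M := by simp
      have hg1 := abs_le.mp (hgb 1 (by omega))
      have hηn0 := hηnn n
      have hηn1 := hηle1 n
      have hcancel : (1 - η ^ n) * g 1 ≤ (1 - η ^ n) * M :=
        mul_le_mul_of_nonneg_left hg1.2 (by linarith)
      have hTn1 : (1:ℝ) ≤ (T:ℝ) := by exact_mod_cast hT
      nlinarith [hcancel, hS, hS2, hnTR]
  -- variation part
  have hvar : ∑ t ∈ Finset.Icc (1:ℤ) T, ∑ i ∈ Finset.range K, η ^ i * v (t - i)
      ≤ W * ∑ j ∈ Finset.Icc (0:ℤ) T, v j := by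
    rw [Finset.sum_comm, hW, Finset.sum_mul]
    refine Finset.sum_le_sum ?_
    intro i _
    rw [← Finset.mul_sum]
    refine mul_le_mul_of_nonneg_left ?_ (hηnn i)
    have himg : (Finset.Icc (1 - (i:ℤ)) (T - i)).image (· + (i:ℤ)) = Finset.Icc 1 T := by
      rw [Finset.image_add_right_Icc]
      congr 1 <;> ring
    rw [← himg, Finset.sum_image (by intro a _ b _ h; have h' : a + (i:ℤ) = b + i := h; omega)]
    have e : ∀ j : ℤ, v (j + i - i) = v j := by intro j; congr 1; ring
    rw [Finset.sum_congr rfl fun j _ => e j]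
    rw [← Finset.sum_filter_of_ne (p := fun j : ℤ => 0 ≤ j)
      (fun j _ hne => by by_contra h; exact hne (hv0 j (by omega)))]
    refine Finset.sum_le_sum_of_subset_of_nonneg ?_ (fun j _ _ => hvnn j)
    intro j hj
    simp only [Finset.mem_filter, Finset.mem_Icc] at hj ⊢
    omega
  -- combine
  rw [← Finset.mul_sum]
  have hA : ∑ t ∈ Finset.Icc (1:ℤ) T, ∑ i ∈ Finset.range K,
      η ^ i * (φ (t - i) (x (t - i)) - φ (t - i) (x (t + 1 - i)))
      ≤ 2 * M * (T:ℝ) + W * ∑ j ∈ Finset.Icc (0:ℤ) T, v j := by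
    calc ∑ t ∈ Finset.Icc (1:ℤ) T, ∑ i ∈ Finset.range K,
        η ^ i * (φ (t - i) (x (t - i)) - φ (t - i) (x (t + 1 - i)))
        ≤ ∑ t ∈ Finset.Icc (1:ℤ) T,
            ((∑ i ∈ Finset.range K, η ^ i * (g (t - i) - g (t + 1 - i)))
              + (∑ i ∈ Finset.range K, η ^ i * v (t - i))) := Finset.sum_le_sum hsum1
      _ = (∑ t ∈ Finset.Icc (1:ℤ) T, ∑ i ∈ Finset.range K,
            η ^ i * (g (t - i) - g (t + 1 - i)))
          + ∑ t ∈ Finset.Icc (1:ℤ) T, ∑ i ∈ Finset.range K, η ^ i * v (t - i) :=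
          Finset.sum_add_distrib
      _ ≤ 2 * M * (T:ℝ) + W * ∑ j ∈ Finset.Icc (0:ℤ) T, v j := by
          refine add_le_add ?_ hvar
          rw [htele]; exact hB
  calc (1 / W) * ∑ t ∈ Finset.Icc (1:ℤ) T, ∑ i ∈ Finset.range K,
      η ^ i * (φ (t - i) (x (t - i)) - φ (t - i) (x (t + 1 - i)))
      ≤ (1 / W) * (2 * M * (T:ℝ) + W * ∑ j ∈ Finset.Icc (0:ℤ) T, v j) :=
        mul_le_mul_of_nonneg_left hA (by positivity)
    _ = 2 * M * (T:ℝ) / W + ∑ j ∈ Finset.Icc (0:ℤ) T, v j := by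
        field_simp
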